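/- Let M be the (unique) formal power series over ℚ satisfying M = 1 + x·M + x²·M² (the Motzkin generating function), and let M(x²) denote the series obtained from M by substituting x² for x. Let c_n denote the number of DD-equivalence classes of ballot paths of length n (so c₀ = 1). Then in the ring of formal power series over ℚ, (∑_{n≥0} c_n xⁿ) · (1 − x + x² − x³·M(x²)) = 1 + x²·M(x²). -/

import Mathlib

/-- A path is a list of steps: `true` is an up-step U, `false` is a down-step D. -/
abbrev Step := Bool

/-- The height of the `j`-th lattice point of the path `p`. -/
def pathHeight (p : List Bool) (j : ℕ) : ℤ :=
  ((p.take j).count true : ℤ) - ((p.take j).count false : ℤ)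

/-- A ballot path: every prefix has at least as many U's as D's. -/
def IsBallot (p : List Bool) : Prop :=
  ∀ k : ℕ, (p.take k).count false ≤ (p.take k).count true

/-- A Dyck path: a ballot path with equally many U's and D's. -/
def IsDyck (p : List Bool) : Prop :=
  IsBallot p ∧ p.count true = p.count false

/-- The string `τ` occurs at (0-indexed) position `i` of the path `p`. -/
def OccursAt (τ p : List Bool) (i : ℕ) : Prop :=
  (p.drop i).take τ.length = τ

/-- Two paths are `τ`-equivalent: same length and occurrences of `τ` at the same positions. -/
def PathEquiv (τ p q : List Bool) : Prop :=
  p.length = q.length ∧ ∀ i : ℕ, OccursAt τ p i ↔ OccursAt τ q i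

/-- The setoid of `τ`-equivalence on ballot paths of length `n`. -/
def ballotSetoid (τ : List Bool) (n : ℕ) :
    Setoid {p : List Bool // IsBallot p ∧ p.length = n} where
  r p q := PathEquiv τ p.1 q.1
  iseqv := ⟨fun _ => ⟨rfl, fun _ => Iff.rfl⟩,
            fun h => ⟨h.1.symm, fun i => (h.2 i).symm⟩,
            fun h1 h2 => ⟨h1.1.trans h2.1, fun i => (h1.2 i).trans (h2.2 i)⟩⟩

/-- The number of `τ`-equivalence classes of ballot paths of length `n`. -/
noncomputable def numBallotClasses (τ : List Bool) (n : ℕ) : ℕ :=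
  Nat.card (Quotient (ballotSetoid τ n))

/-- The setoid of `τ`-equivalence on Dyck paths of semilength `n`. -/
def dyckSetoid (τ : List Bool) (n : ℕ) :
    Setoid {p : List Bool // IsDyck p ∧ p.length = 2 * n} where
  r p q := PathEquiv τ p.1 q.1
  iseqv := ⟨fun _ => ⟨rfl, fun _ => Iff.rfl⟩,
            fun h => ⟨h.1.symm, fun i => (h.2 i).symm⟩,
            fun h1 h2 => ⟨h1.1.trans h2.1, fun i => (h1.2 i).trans (h2.2 i)⟩⟩

/-- The number of `τ`-equivalence classes of Dyck paths of semilength `n`. -/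
noncomputable def numDyckClasses (τ : List Bool) (n : ℕ) : ℕ :=
  Nat.card (Quotient (dyckSetoid τ n))


/-- no isolated down-step -/
def NI (l : List Bool) : Prop :=
  ∀ i : ℕ, l[i]? = some false →
    l[i+1]? = some false ∨ ∃ j, i = j + 1 ∧ l[j]? = some false

lemma ni_nil : NI [] := by intro i hi; simp at hi

lemma ni_FF : NI [false, false] := by
  intro i hi
  match i with
  | 0 => left; rfl
  | 1 => right; exact ⟨0, rfl, rfl⟩
  | (n+2) => simp at hi

lemma ni_cons_true {l : List Bool} : NI (true :: l) ↔ NI l := by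
  constructor
  · intro h i hi
    have := h (i+1) (by simpa using hi)
    rcases this with h1 | ⟨j, hj, hj2⟩
    · left; simpa using h1
    · right
      match j, hj with
      | 0, hj => simp at hj2
      | (j'+1), hj => exact ⟨j', by omega, by simpa using hj2⟩
  · intro h i hi
    match i with
    | 0 => simp at hi
    | (i'+1) =>
      rcases h i' (by simpa using hi) with h1 | ⟨j, hj, hj2⟩
      · left; simpa using h1
      · right; exact ⟨j+1, by omega, by simpa using hj2⟩

lemma ni_append {u v : List Bool} (hv : v = [] ∨ v[0]? = some true) :
    NI (u ++ v) ↔ NI u ∧ NI v := by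
  have hv0 : v[0]? ≠ some false := by
    rcases hv with h | h
    · subst h; simp
    · rw [h]; simp
  constructor
  · intro h
    constructor
    · intro i hi
      have hilt : i < u.length := by
        rcases List.getElem?_eq_some_iff.1 hi with ⟨h', _⟩; exact h'
      rcases h i (by rwa [List.getElem?_append_left hilt]) with h1 | ⟨j, hj, hj2⟩
      · by_cases h2 : i + 1 < u.length
        · left; rwa [List.getElem?_append_left h2] at h1
        · exfalso
          have : i + 1 = u.length := by omega
          rw [List.getElem?_append_right (by omega), this] at h1
          simp at h1
          exact hv0 h1
      · right
        exact ⟨j, hj, by rwa [List.getElem?_append_left (by omega)] at hj2⟩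
    · intro i hi
      have key : (u ++ v)[u.length + i]? = some false := by
        rw [List.getElem?_append_right (by omega)]; simpa using hi
      rcases h (u.length + i) key with h1 | ⟨j, hj, hj2⟩
      · left
        rw [List.getElem?_append_right (by omega)] at h1
        simpa [Nat.add_assoc] using h1
      · right
        match i with
        | 0 => exact absurd hi hv0
        | (i'+1) =>
          refine ⟨i', rfl, ?_⟩
          have hju : j = u.length + i' := by omega
          rw [List.getElem?_append_right (by omega)] at hj2
          rw [hju] at hj2; simpa using hj2
  · rintro ⟨hu, hvn⟩ i hi
    by_cases hilt : i < u.length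
    · rw [List.getElem?_append_left hilt] at hi
      rcases hu i hi with h1 | ⟨j, hj, hj2⟩
      · have h2 : i + 1 < u.length := (List.getElem?_eq_some_iff.1 h1).1
        left
        rwa [List.getElem?_append_left h2]
      · right; exact ⟨j, hj, by rwa [List.getElem?_append_left (by omega)]⟩
    · rw [List.getElem?_append_right (by omega)] at hi
      have hine : i - u.length ≠ 0 := fun h0 => hv0 (h0 ▸ hi)
      rcases hvn (i - u.length) hi with h1 | ⟨j, hj, hj2⟩
      · left
        rw [List.getElem?_append_right (by omega)]
        have : i + 1 - u.length = i - u.length + 1 := by omega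
        rwa [this]
      · right
        refine ⟨u.length + j, by omega, ?_⟩
        rw [List.getElem?_append_right (by omega)]
        simpa using hj2

lemma ni_append_cons_true {u v : List Bool} : NI (u ++ true :: v) ↔ NI u ∧ NI v := by
  rw [ni_append (v := true :: v) (Or.inr (by simp)), ni_cons_true]

lemma ni_first_return {w₁ w₂ : List Bool} (hw₂ : w₂ = [] ∨ w₂[0]? = some true) :
    NI (true :: (w₁ ++ false :: w₂)) ↔ NI (w₁ ++ [false]) ∧ NI w₂ := by
  have : true :: (w₁ ++ false :: w₂) = (true :: (w₁ ++ [false])) ++ w₂ := by simp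
  rw [this, ni_append hw₂, ni_cons_true]

lemma ni_snoc_false {l : List Bool} (hl : l[l.length - 1]? = some false) (h : NI l) :
    NI (l ++ [false]) := by
  have hlen : 1 ≤ l.length := by
    by_contra h0
    rw [List.getElem?_eq_none (by omega)] at hl; simp at hl
  intro i hi
  by_cases hilt : i < l.length
  · rw [List.getElem?_append_left hilt] at hi
    rcases h i hi with h1 | ⟨j, hj, hj2⟩
    · have : i + 1 < l.length := by
        rcases List.getElem?_eq_some_iff.1 h1 with ⟨h', _⟩; omega
      left; rwa [List.getElem?_append_left this]
    · right; exact ⟨j, hj, by rwa [List.getElem?_append_left (by omega)]⟩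
  · have hle : i ≤ l.length := by
      by_contra h0
      rw [List.getElem?_append_right (by omega)] at hi
      rw [List.getElem?_eq_none (by simp; omega)] at hi; simp at hi
    have hieq : i = l.length := by omega
    right
    exact ⟨l.length - 1, by omega, by rwa [List.getElem?_append_left (by omega)]⟩

lemma not_ni_snoc_TF (v : List Bool) : ¬ NI (v ++ [true, false]) := by
  intro h
  have h1 : (v ++ [true, false])[v.length + 1]? = some false := by
    rw [List.getElem?_append_right (by omega)]; simp
  rcases h (v.length + 1) h1 with h2 | ⟨j, hj, hj2⟩
  · rw [List.getElem?_append_right (by omega)] at h2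
    have : v.length + 1 + 1 - v.length = 2 := by omega
    rw [this] at h2; simp at h2
  · have : j = v.length := by omega
    subst this
    rw [List.getElem?_append_right (by omega)] at hj2
    simp at hj2

lemma ni_decomp {w : List Bool} (hlen : 2 ≤ w.length)
    (hW : NI (w ++ [false])) (hnw : ¬ NI w) :
    NI (w.take (w.length - 2)) ∧ w = w.take (w.length - 2) ++ [true, false] := by
  unfold NI at hnw; push_neg at hnw
  obtain ⟨i, hiF, hnr, hnl⟩ := hnw
  have hib : i < w.length := (List.getElem?_eq_some_iff.1 hiF).1
  -- show i = w.length - 1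
  have hieq : i = w.length - 1 := by
    by_contra hne
    have hi1 : i + 1 < w.length := by omega
    rcases hW i (by rwa [List.getElem?_append_left hib]) with h1 | ⟨j, hj, hj2⟩
    · rw [List.getElem?_append_left hi1] at h1
      exact hnr h1
    · rw [List.getElem?_append_left (by omega)] at hj2
      exact hnl j hj hj2
  have hlast : w[w.length - 1]? = some false := hieq ▸ hiF
  have hpen : w[w.length - 2]? = some true := by
    have hp : w.length - 2 < w.length := by omega
    rcases List.getElem?_eq_some_iff.1 (List.getElem?_eq_getElem hp) with _
    have := hnl (w.length - 2) (by omega)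
    cases hb : w[w.length - 2] with
    | false => exact absurd (by rw [List.getElem?_eq_getElem hp, hb]) this
    | true => rw [List.getElem?_eq_getElem hp, hb]
  constructor
  · intro i' hi'
    have hi'lt : i' < w.length - 2 := by
      have := (List.getElem?_eq_some_iff.1 hi').1
      simpa using this
    have hi'w : w[i']? = some false := by
      rw [List.getElem?_take, if_pos (by omega)] at hi'
      exact hi'
    rcases hW i' (by rw [List.getElem?_append_left (by omega)]; exact hi'w) with h1 | ⟨j, hj, hj2⟩
    · rw [List.getElem?_append_left (by omega)] at h1
      by_cases hc : i' + 1 < w.length - 2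
      · left; rw [List.getElem?_take, if_pos (by omega)]; exact h1
      · exfalso
        have : i' + 1 = w.length - 2 := by omega
        rw [this, hpen] at h1; simp at h1
    · right
      refine ⟨j, hj, ?_⟩
      rw [List.getElem?_append_left (by omega)] at hj2
      rw [List.getElem?_take, if_pos (by omega)]; exact hj2
  · have h1 : w = w.take (w.length - 2) ++ w.drop (w.length - 2) := (List.take_append_drop _ _).symm
    have hp : w.length - 2 < w.length := by omega
    have h2 : w.drop (w.length - 2) = w[w.length - 2] :: w.drop (w.length - 2 + 1) :=
      List.drop_eq_getElem_cons hp
    have h3 : w.length - 2 + 1 = w.length - 1 := by omega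
    have h4 : w.drop (w.length - 1) = w[w.length - 1] :: w.drop (w.length - 1 + 1) :=
      List.drop_eq_getElem_cons (by omega)
    have h5 : w.drop (w.length - 1 + 1) = [] := by
      apply List.drop_eq_nil_of_le; omega
    have hvt : w[w.length - 2] = true := by
      have := List.getElem?_eq_getElem hp
      rw [hpen] at this; exact (Option.some_injective _ this.symm)
    have hvf : w[w.length - 1] = false := by
      have := List.getElem?_eq_getElem (show w.length - 1 < w.length by omega)
      rw [hlast] at this; exact (Option.some_injective _ this.symm)
    rw [h2, h3, h4, h5, hvt, hvf] at h1
    exact h1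

/-! ### pathHeight toolkit -/

lemma count_take_succ (l : List Bool) (k : ℕ) (b : Bool) :
    (l.take (k+1)).count b = (l.take k).count b + (if l[k]? = some b then 1 else 0) := by
  rw [List.take_succ, List.count_append]
  congr 1
  cases h : l[k]? with
  | none => simp
  | some c =>
    simp only [Option.toList]
    rcases b <;> rcases c <;> simp

lemma pathHeight_zero (p : List Bool) : pathHeight p 0 = 0 := by simp [pathHeight]

lemma pathHeight_succ (p : List Bool) (k : ℕ) :
    pathHeight p (k+1) = pathHeight p k
      + (if p[k]? = some true then 1 else 0) - (if p[k]? = some false then 1 else 0) := by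
  unfold pathHeight
  rw [count_take_succ, count_take_succ]
  push_cast
  by_cases h : k < p.length
  · cases hb : p[k] with
    | true => rw [List.getElem?_eq_getElem h, hb]; simp; ring
    | false => rw [List.getElem?_eq_getElem h, hb]; simp; ring
  · rw [List.getElem?_eq_none (by omega)]; simp

lemma pathHeight_stable (p : List Bool) {k : ℕ} (h : p.length ≤ k) :
    pathHeight p k = pathHeight p p.length := by
  unfold pathHeight
  rw [List.take_of_length_le h, List.take_length]

lemma isBallot_iff (p : List Bool) : IsBallot p ↔ ∀ k, 0 ≤ pathHeight p k := by
  unfold IsBallot pathHeight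
  constructor
  · intro h k; have := h k; omega
  · intro h k; have := h k; omega

lemma pathHeight_take (p : List Bool) (m j : ℕ) (h : j ≤ m) :
    pathHeight (p.take m) j = pathHeight p j := by
  unfold pathHeight
  rw [List.take_take, min_eq_left h]

lemma isBallot_take (p : List Bool) (m : ℕ) (h : IsBallot p) : IsBallot (p.take m) := by
  rw [isBallot_iff] at h ⊢
  intro k
  by_cases hk : k ≤ m
  · rw [pathHeight_take p m k hk]; exact h k
  · rw [pathHeight_stable _ (by simp; omega)]
    rcases le_or_gt m p.length with h1 | h1
    · rw [show (p.take m).length = m by simp; omega, pathHeight_take p m m le_rfl]; exact h m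
    · rw [show (p.take m).length = p.length by simp; omega, pathHeight_take p m _ (by omega)]
      exact h _

lemma pathHeight_append (u v : List Bool) (j : ℕ) :
    pathHeight (u ++ v) (u.length + j) = pathHeight u u.length + pathHeight v j := by
  unfold pathHeight
  rw [List.take_append, List.count_append, List.count_append, List.take_length]
  simp only [List.take_of_length_le (show u.length ≤ u.length + j by omega), Nat.add_sub_cancel_left]
  push_cast; ring

lemma pathHeight_append_left (u v : List Bool) {k : ℕ} (h : k ≤ u.length) :
    pathHeight (u ++ v) k = pathHeight u k := by
  unfold pathHeight
  rw [List.take_append_of_le_length h]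

lemma pathHeight_drop (p : List Bool) (a j : ℕ) :
    pathHeight (p.drop a) j = pathHeight p (a + j) - pathHeight p a := by
  unfold pathHeight
  rw [List.take_add, List.count_append, List.count_append]
  push_cast; ring

lemma pathHeight_length (p : List Bool) :
    pathHeight p p.length = (p.count true : ℤ) - (p.count false : ℤ) := by
  unfold pathHeight; rw [List.take_length]

lemma count_true_add_count_false (l : List Bool) : l.count true + l.count false = l.length := by
  induction l with
  | nil => simp
  | cons a l ih => cases a <;> simp [List.count_cons] <;> omega

lemma isDyck_iff (p : List Bool) : IsDyck p ↔ IsBallot p ∧ pathHeight p p.length = 0 := by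
  unfold IsDyck
  rw [pathHeight_length]
  constructor
  · rintro ⟨h1, h2⟩; exact ⟨h1, by omega⟩
  · rintro ⟨h1, h2⟩; refine ⟨h1, ?_⟩; omega

lemma isDyck_length_even {p : List Bool} (h : IsDyck p) : p.length = 2 * p.count true := by
  have := count_true_add_count_false p
  have h2 := h.2
  omega

lemma ballot_head {p : List Bool} (h : IsBallot p) (hne : p ≠ []) : p[0]? = some true := by
  rw [isBallot_iff] at h
  have h1 := h 1
  rw [pathHeight_succ, pathHeight_zero] at h1
  have hlt : 0 < p.length := List.length_pos_iff.2 hne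
  cases hb : p[0] with
  | true => rw [List.getElem?_eq_getElem hlt, hb]
  | false =>
    exfalso
    rw [List.getElem?_eq_getElem hlt, hb] at h1
    simp only [reduceIte] at h1
    norm_num at h1

lemma dyck_last {p : List Bool} (h : IsDyck p) (hne : p ≠ []) :
    p[p.length - 1]? = some false := by
  obtain ⟨hb, he⟩ := (isDyck_iff p).1 h
  rw [isBallot_iff] at hb
  have hlt : 0 < p.length := List.length_pos_iff.2 hne
  have h1 := hb (p.length - 1)
  have h2 := pathHeight_succ p (p.length - 1)
  rw [show p.length - 1 + 1 = p.length by omega, he] at h2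
  cases hl : p[p.length - 1] with
  | false => rw [List.getElem?_eq_getElem (by omega), hl]
  | true =>
    exfalso
    rw [List.getElem?_eq_getElem (by omega), hl] at h2
    simp only [reduceIte] at h2
    norm_num at h2
    omega


/-! ### occurrences and canonical representatives -/

def Occ (p : List Bool) (i : ℕ) : Prop := p[i]? = some false ∧ p[i+1]? = some false

instance (p : List Bool) (i : ℕ) : Decidable (Occ p i) :=
  inferInstanceAs (Decidable (p[i]? = some false ∧ p[i+1]? = some false))

lemma occursAt_iff (p : List Bool) (i : ℕ) : OccursAt [false, false] p i ↔ Occ p i := by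
  unfold OccursAt Occ
  have h0 : p[i]? = (p.drop i)[0]? := by simp [List.getElem?_drop]
  have h1 : p[i+1]? = (p.drop i)[1]? := by simp [List.getElem?_drop]
  rw [h0, h1]
  rcases hd : p.drop i with _ | ⟨x, _ | ⟨y, rest⟩⟩ <;> simp

abbrev canonCond (p : List Bool) (j : ℕ) : Prop := Occ p j ∨ (j ≠ 0 ∧ Occ p (j-1))

def canon (p : List Bool) : List Bool :=
  (List.range p.length).map (fun j => if canonCond p j then false else true)

lemma canon_length (p : List Bool) : (canon p).length = p.length := by simp [canon]

lemma canon_getElem? (p : List Bool) (j : ℕ) (h : j < p.length) :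
    (canon p)[j]? = some (if canonCond p j then false else true) := by
  unfold canon
  rw [List.getElem?_map, List.getElem?_range h]
  rfl

lemma canon_getElem?_of_ge (p : List Bool) (j : ℕ) (h : p.length ≤ j) :
    (canon p)[j]? = none := List.getElem?_eq_none (by rw [canon_length]; exact h)

lemma canon_false_iff (p : List Bool) (j : ℕ) :
    (canon p)[j]? = some false ↔ j < p.length ∧ canonCond p j := by
  by_cases h : j < p.length
  · rw [canon_getElem? p j h]
    by_cases hc : canonCond p j
    · simp [hc, h]
    · simp [hc, h]
  · rw [canon_getElem?_of_ge p j (by omega)]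
    simp; omega

lemma canon_false_imp (p : List Bool) (j : ℕ)
    (h : (canon p)[j]? = some false) : p[j]? = some false := by
  rw [canon_false_iff] at h
  rcases h.2 with hc | ⟨hj0, hc⟩
  · exact hc.1
  · have := hc.2
    rwa [show j - 1 + 1 = j by omega] at this

lemma occ_canon (p : List Bool) (i : ℕ) : Occ (canon p) i ↔ Occ p i := by
  constructor
  · rintro ⟨h1, h2⟩
    rw [canon_false_iff] at h1 h2
    rcases h2.2 with hc2 | ⟨_, hc2⟩
    · rcases h1.2 with hc | ⟨hi0, hc⟩
      · exact hc
      · refine ⟨?_, hc2.1⟩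
        have := hc.2
        rwa [show i - 1 + 1 = i by omega] at this
    · rwa [show i + 1 - 1 = i by omega] at hc2
  · intro h
    have hb : i + 1 < p.length := (List.getElem?_eq_some_iff.1 h.2).1
    constructor
    · rw [canon_false_iff]; exact ⟨by omega, Or.inl h⟩
    · rw [canon_false_iff]
      refine ⟨hb, Or.inr ⟨by omega, ?_⟩⟩
      rwa [show i + 1 - 1 = i by omega]

lemma ni_canon (p : List Bool) : NI (canon p) := by
  intro i hi
  rw [canon_false_iff] at hi
  obtain ⟨hilt, hc⟩ := hi
  rcases hc with hc | ⟨hi0, hc⟩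
  · left
    rw [canon_false_iff]
    have : i + 1 < p.length := (List.getElem?_eq_some_iff.1 hc.2).1
    refine ⟨this, Or.inr ⟨by omega, ?_⟩⟩
    rwa [show i + 1 - 1 = i by omega]
  · right
    refine ⟨i - 1, by omega, ?_⟩
    rw [canon_false_iff]
    have : i - 1 + 1 < p.length := (List.getElem?_eq_some_iff.1 hc.2).1
    exact ⟨by omega, Or.inl hc⟩

lemma canon_eq_self (p : List Bool) (h : NI p) : canon p = p := by
  apply List.ext_getElem?
  intro j
  by_cases hj : j < p.length
  · rw [canon_getElem? p j hj, List.getElem?_eq_getElem hj]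
    congr 1
    cases hb : p[j] with
    | false =>
      rcases h j (by rw [List.getElem?_eq_getElem hj, hb]) with h1 | ⟨j', hj', h1⟩
      · rw [if_pos (Or.inl ⟨by rw [List.getElem?_eq_getElem hj, hb], h1⟩)]
      · rw [if_pos]
        right
        refine ⟨by omega, ?_, ?_⟩
        · rwa [show j - 1 = j' by omega]
        · rw [show j - 1 + 1 = j by omega, List.getElem?_eq_getElem hj, hb]
    | true =>
      rw [if_neg]
      rintro (hc | ⟨hj0, hc⟩)
      · have := hc.1
        rw [List.getElem?_eq_getElem hj, hb] at this; simp at this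
      · have := hc.2
        rw [show j - 1 + 1 = j by omega, List.getElem?_eq_getElem hj, hb] at this
        simp at this
  · rw [canon_getElem?_of_ge p j (by omega), List.getElem?_eq_none (by omega)]

lemma pathEquiv_canon (p : List Bool) : PathEquiv [false, false] p (canon p) := by
  refine ⟨(canon_length p).symm, fun i => ?_⟩
  rw [occursAt_iff, occursAt_iff]
  exact (occ_canon p i).symm

lemma canon_congr {p q : List Bool} (h : PathEquiv [false, false] p q) :
    canon p = canon q := by
  have hlen : p.length = q.length := h.1
  have hocc : ∀ i, Occ p i ↔ Occ q i := by
    intro i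
    rw [← occursAt_iff, ← occursAt_iff]
    exact h.2 i
  unfold canon
  rw [hlen]
  apply List.map_congr_left
  intro j _
  exact if_congr (or_congr (hocc j) (and_congr Iff.rfl (hocc (j-1)))) rfl rfl

lemma count_false_take_le {l' l : List Bool}
    (h : ∀ j : ℕ, l'[j]? = some false → l[j]? = some false) (k : ℕ) :
    (l'.take k).count false ≤ (l.take k).count false := by
  induction k with
  | zero => simp
  | succ k ih =>
    rw [count_take_succ, count_take_succ]
    by_cases hc : l'[k]? = some false
    · rw [if_pos hc, if_pos (h k hc)]; omega
    · rw [if_neg hc]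
      split <;> omega

lemma canon_isBallot {p : List Bool} (h : IsBallot p) : IsBallot (canon p) := by
  intro k
  have hcount := count_false_take_le (fun j => canon_false_imp p j) k
  have hlen : ((canon p).take k).length = (p.take k).length := by
    simp [canon_length]
  have h1 := count_true_add_count_false ((canon p).take k)
  have h2 := count_true_add_count_false (p.take k)
  have h3 := h k
  omega


/-! ### counting definitions -/

lemma finite_subtype_length {P : List Bool → Prop} {n : ℕ} (h : ∀ p, P p → p.length = n) :
    Finite {p : List Bool // P p} := by
  have hsub : {p : List Bool | P p} ⊆ {l : List Bool | l.length = n} := fun p hp => h p hp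
  exact ((List.finite_length_eq Bool n).subset hsub).to_subtype

def BN (n : ℕ) : Type := {p : List Bool // IsBallot p ∧ p.length = n ∧ NI p}
def DN (n : ℕ) : Type := {p : List Bool // IsDyck p ∧ p.length = n ∧ NI p}
def WN (n : ℕ) : Type := {p : List Bool // IsDyck p ∧ p.length = n ∧ NI (p ++ [false])}

instance (n : ℕ) : Finite (BN n) := finite_subtype_length (fun p hp => hp.2.1)
instance (n : ℕ) : Finite (DN n) := finite_subtype_length (fun p hp => hp.2.1)
instance (n : ℕ) : Finite (WN n) := finite_subtype_length (fun p hp => hp.2.1)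

noncomputable def bC (n : ℕ) : ℕ := Nat.card (BN n)
noncomputable def dC (n : ℕ) : ℕ := Nat.card (DN n)
noncomputable def wC (n : ℕ) : ℕ := Nat.card (WN n)

/-! ### the number of classes equals the number of canonical paths -/

lemma numBallotClasses_eq (n : ℕ) : numBallotClasses [false, false] n = bC n := by
  unfold numBallotClasses bC
  refine (Nat.card_eq_of_bijective
    (fun x : BN n => Quotient.mk (ballotSetoid [false, false] n) ⟨x.1, x.2.1, x.2.2.1⟩) ⟨?_, ?_⟩).symm
  · rintro ⟨p, hp⟩ ⟨q, hq⟩ h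
    have hrel : PathEquiv [false, false] p q := Quotient.exact h
    have : canon p = canon q := canon_congr hrel
    rw [canon_eq_self p hp.2.2, canon_eq_self q hq.2.2] at this
    exact Subtype.ext this
  · intro c
    induction c using Quotient.ind with
    | _ x =>
      obtain ⟨p, hp, hlen⟩ := x
      refine ⟨⟨canon p, canon_isBallot hp, by rw [canon_length]; exact hlen, ni_canon p⟩, ?_⟩
      apply Quotient.sound
      exact ⟨(pathEquiv_canon p).1.symm, fun i => ((pathEquiv_canon p).2 i).symm⟩

/-! ### small counting facts -/

lemma isBallot_nil : IsBallot ([] : List Bool) := by intro k; simp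

lemma isDyck_nil : IsDyck ([] : List Bool) := ⟨isBallot_nil, rfl⟩

lemma not_ni_single : ¬ NI [false] := by
  intro h
  rcases h 0 rfl with h1 | ⟨j, hj, _⟩
  · simp at h1
  · omega

instance : Unique (DN 0) where
  default := ⟨[], isDyck_nil, rfl, ni_nil⟩
  uniq := by
    rintro ⟨p, hd, hlen, hni⟩
    have : p = [] := List.length_eq_zero_iff.1 hlen
    apply Subtype.ext
    simpa using this

lemma dC_zero : dC 0 = 1 := Nat.card_unique

lemma dC_odd {n : ℕ} (h : ¬ 2 ∣ n) : dC n = 0 := by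
  have : IsEmpty (DN n) := by
    constructor
    rintro ⟨p, hd, hlen, _⟩
    exact h ⟨p.count true, by rw [← hlen, isDyck_length_even hd]⟩
  exact Nat.card_of_isEmpty

lemma wC_zero : wC 0 = 0 := by
  have : IsEmpty (WN 0) := by
    constructor
    rintro ⟨p, hd, hlen, hni⟩
    have : p = [] := List.length_eq_zero_iff.1 hlen
    subst this
    exact not_ni_single (by simpa using hni)
  exact Nat.card_of_isEmpty

lemma wC_one : wC 1 = 0 := by
  have : IsEmpty (WN 1) := by
    constructor
    rintro ⟨p, hd, hlen, _⟩
    have := isDyck_length_even hd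
    omega
  exact Nat.card_of_isEmpty

/-! ### pathHeight on [true, false] -/

lemma pH_TF_two : pathHeight [true, false] 2 = 0 := by decide

lemma pH_TF_nonneg (j : ℕ) : 0 ≤ pathHeight [true, false] j := by
  match j with
  | 0 => exact le_of_eq (pathHeight_zero _).symm
  | 1 => decide
  | (j+2) =>
    rw [pathHeight_stable _ (by simp)]
    decide

/-! ### the wC recurrence -/

lemma wC_eq (m : ℕ) : wC (m + 2) = dC (m + 2) + dC m := by
  classical
  unfold wC dC
  rw [← Nat.card_sum]
  symm
  refine Nat.card_eq_of_bijective
    (Sum.elim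
      (fun w => ⟨w.1, w.2.1, w.2.2.1, by
        refine ni_snoc_false ?_ w.2.2.2
        have hne : w.1 ≠ [] := by
          intro h0
          have := w.2.2.1
          rw [h0] at this; simp at this
        rw [w.2.2.1]
        have := dyck_last w.2.1 hne
        rwa [w.2.2.1] at this⟩)
      (fun v => ⟨v.1 ++ [true, false], by
        obtain ⟨v, hd, hlen, hni⟩ := v
        dsimp only
        have hH := (isDyck_iff v).1 hd
        refine ⟨(isDyck_iff _).2 ⟨?_, ?_⟩, ?_, ?_⟩
        · rw [isBallot_iff]
          intro k
          rcases le_or_gt k v.length with hk | hk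
          · rw [pathHeight_append_left _ _ hk]
            exact (isBallot_iff v).1 hH.1 k
          · have : k = v.length + (k - v.length) := by omega
            rw [this, pathHeight_append]
            have := pH_TF_nonneg (k - v.length)
            have := (isBallot_iff v).1 hH.1 v.length
            omega
        · rw [show (v ++ [true, false]).length = v.length + 2 by simp]
          rw [pathHeight_append, hH.2, pH_TF_two]
          ring
        · simp; omega
        · rw [show (v ++ [true, false]) ++ [false] = v ++ true :: [false, false] by simp]
          rw [ni_append_cons_true]
          exact ⟨hni, ni_FF⟩⟩)) ⟨?_, ?_⟩
  · rintro (w | v) (w' | v') h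
    · have : w.1 = w'.1 := congrArg (fun x : WN (m+2) => x.1) h
      rw [Sum.inl.injEq]
      exact Subtype.ext this
    · exfalso
      have : w.1 = v'.1 ++ [true, false] := congrArg (fun x : WN (m+2) => x.1) h
      exact not_ni_snoc_TF v'.1 (this ▸ w.2.2.2)
    · exfalso
      have : v.1 ++ [true, false] = w'.1 := congrArg (fun x : WN (m+2) => x.1) h
      exact not_ni_snoc_TF v.1 (this ▸ w'.2.2.2)
    · have hval : v.1 ++ [true, false] = v'.1 ++ [true, false] := congrArg (fun x : WN (m+2) => x.1) h
      have hlen : v.1.length = v'.1.length := by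
        have := congrArg List.length hval
        simp at this; omega
      rw [Sum.inr.injEq]
      exact Subtype.ext ((List.append_inj hval hlen).1
        )
  · rintro ⟨p, hd, hlen, hniF⟩
    by_cases hni : NI p
    · exact ⟨Sum.inl ⟨p, hd, hlen, hni⟩, rfl⟩
    · obtain ⟨hnitake, hdecomp⟩ := ni_decomp (by omega) hniF hni
      have hm : p.length - 2 = m := by omega
      rw [hm] at hnitake hdecomp
      have htl : (List.take m p).length = m := by simp; omega
      have hv : IsDyck (p.take m) := by
        rw [isDyck_iff]
        constructor
        · exact isBallot_take p m hd.1
        · rw [htl, pathHeight_take p m m le_rfl]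
          have h0 : pathHeight p (m + 2) = 0 := by
            have := ((isDyck_iff p).1 hd).2
            rwa [hlen] at this
          have h2 := pathHeight_succ p (m+1)
          have h3 := pathHeight_succ p m
          -- p[m] = true, p[m+1] = false from hdecomp
          have hgm : p[m]? = some true := by
            conv_lhs => rw [hdecomp]
            rw [List.getElem?_append_right (by rw [htl])]
            rw [show m - (List.take m p).length = 0 by rw [htl]; omega]
            rfl
          have hgm1 : p[m+1]? = some false := by
            conv_lhs => rw [hdecomp]
            rw [List.getElem?_append_right (by rw [htl]; omega)]
            rw [show m + 1 - (List.take m p).length = 1 by rw [htl]; omega]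
            rfl
          rw [hgm1] at h2
          rw [hgm] at h3
          simp at h2 h3
          rw [show m + 1 + 1 = m + 2 by omega] at h2
          omega
      refine ⟨Sum.inr ⟨p.take m, hv, by simp; omega, hnitake⟩, ?_⟩
      apply Subtype.ext
      exact hdecomp.symm

/-! ### more height helpers -/

lemma pathHeight_cons (b : Bool) (l : List Bool) (j : ℕ) :
    pathHeight (b :: l) (j+1) = pathHeight l j + (if b then 1 else -1) := by
  unfold pathHeight
  rw [List.take_succ_cons]
  cases b <;> simp [List.count_cons] <;> push_cast <;> ring

lemma count_eq_iff_height (p : List Bool) (j : ℕ) :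
    (p.take j).count true = (p.take j).count false ↔ pathHeight p j = 0 := by
  unfold pathHeight; omega

lemma pathHeight_mid (u v : List Bool) (j : ℕ) :
    pathHeight (u ++ true :: v) (u.length + (j+1))
      = pathHeight u u.length + 1 + pathHeight v j := by
  rw [pathHeight_append, pathHeight_cons]
  simp; ring

lemma nat_card_sigma {n : ℕ} (G : Fin n → Type) [∀ i, Finite (G i)] :
    Nat.card (Σ i, G i) = ∑ i : Fin n, Nat.card (G i) := by
  letI : ∀ i, Fintype (G i) := fun i => Fintype.ofFinite _
  letI : Fintype (Σ i, G i) := inferInstance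
  simp only [Nat.card_eq_fintype_card]
  exact Fintype.card_sigma

/-! ### the bC recurrence -/

lemma bC_eq (n : ℕ) : bC n = dC n + ∑ i ∈ Finset.range n, dC i * bC (n - 1 - i) := by
  classical
  unfold bC dC
  have hcard : ∑ i ∈ Finset.range n, Nat.card (DN i) * Nat.card (BN (n - 1 - i))
      = Nat.card (Σ i : Fin n, DN i × BN (n - 1 - i)) := by
    rw [nat_card_sigma]
    rw [← Fin.sum_univ_eq_sum_range (fun i => Nat.card (DN i) * Nat.card (BN (n - 1 - i))) n]
    congr 1
    funext i
    rw [Nat.card_prod]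
  rw [hcard, ← Nat.card_sum]
  symm
  refine Nat.card_eq_of_bijective
    (Sum.elim
      (fun w : DN n => (⟨w.1, w.2.1.1, w.2.2⟩ : BN n))
      (fun s : Σ i : Fin n, DN i × BN (n - 1 - i) =>
        (⟨s.2.1.1 ++ true :: s.2.2.1, by
          obtain ⟨i, ⟨u, hu, hulen, huni⟩, ⟨v, hv, hvlen, hvni⟩⟩ := s
          dsimp only
          have huH := (isDyck_iff u).1 hu
          refine ⟨?_, ?_, ?_⟩
          · rw [isBallot_iff]
            intro k
            rcases le_or_gt k u.length with hk | hk
            · rw [pathHeight_append_left _ _ hk]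
              exact (isBallot_iff u).1 huH.1 k
            · rw [show k = u.length + ((k - u.length - 1) + 1) by omega, pathHeight_mid, huH.2]
              have := (isBallot_iff v).1 hv (k - u.length - 1)
              omega
          · simp
            omega
          · rw [ni_append_cons_true]; exact ⟨huni, hvni⟩⟩ : BN n)))
    ⟨?_, ?_⟩
  · -- injectivity
    have key : ∀ (u v : List Bool), IsDyck u → IsBallot v → ∀ k, u.length < k →
        1 ≤ pathHeight (u ++ true :: v) k := by
      intro u v hu hv k hk
      rw [show k = u.length + ((k - u.length - 1) + 1) by omega, pathHeight_mid,
        ((isDyck_iff u).1 hu).2]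
      have := (isBallot_iff v).1 hv (k - u.length - 1)
      omega
    rintro (w | ⟨⟨i, hi⟩, ⟨u, hu, hulen, huni⟩, ⟨v, hv, hvlen, hvni⟩⟩)
      (w' | ⟨⟨i', hi'⟩, ⟨u', hu', hulen', huni'⟩, ⟨v', hv', hvlen', hvni'⟩⟩) h
    · have : w.1 = w'.1 := congrArg (fun x : BN n => x.1) h
      rw [Sum.inl.injEq]; exact Subtype.ext this
    · exfalso
      have hval : w.1 = u' ++ true :: v' := congrArg (fun x : BN n => x.1) h
      have h1 := key u' v' hu' hv' w.1.length (by rw [hval]; simp)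
      rw [← hval, ((isDyck_iff w.1).1 w.2.1).2] at h1
      omega
    · exfalso
      have hval : u ++ true :: v = w'.1 := congrArg (fun x : BN n => x.1) h
      have h1 := key u v hu hv w'.1.length (by rw [← hval]; simp)
      rw [hval, ((isDyck_iff w'.1).1 w'.2.1).2] at h1
      omega
    · have hval : u ++ true :: v = u' ++ true :: v' := congrArg (fun x : BN n => x.1) h
      have hlen : u.length = u'.length := by
        by_contra hne
        rcases lt_or_gt_of_ne hne with hlt | hlt
        · have h1 := key u v hu hv u'.length hlt
          rw [hval, pathHeight_append_left _ _ le_rfl, ((isDyck_iff u').1 hu').2] at h1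
          omega
        · have h1 := key u' v' hu' hv' u.length hlt
          rw [← hval, pathHeight_append_left _ _ le_rfl, ((isDyck_iff u).1 hu).2] at h1
          omega
      obtain ⟨hueq, hrest⟩ := List.append_inj hval hlen
      have hveq : v = v' := by simpa using hrest
      have hieq : i = i' := by
        have e1 : u.length = i := by simpa using hulen
        have e2 : u'.length = i' := by simpa using hulen'
        omega
      subst hieq; subst hueq; subst hveq
      rfl
  · -- surjectivity
    rintro ⟨p, hb, hlen, hni⟩
    by_cases hd : p.count true = p.count false
    · exact ⟨Sum.inl ⟨p, ⟨hb, hd⟩, hlen, hni⟩, rfl⟩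
    · have hbH := (isBallot_iff p).1 hb
      set P : ℕ → Prop := fun k => (p.take k).count true = (p.take k).count false with hP
      have hP0 : P 0 := by simp [hP]
      set k := Nat.findGreatest P n with hk
      have hkP : P k := Nat.findGreatest_spec (Nat.zero_le n) hP0
      have hkle : k ≤ n := Nat.findGreatest_le n
      have hkH : pathHeight p k = 0 := (count_eq_iff_height p k).1 hkP
      have hkne : k ≠ n := by
        intro he
        apply hd
        have ht : p.take n = p := by rw [← hlen, List.take_length]
        have h2 : (p.take n).count true = (p.take n).count false := by
          rw [← he]; exact hkP
        rwa [ht] at h2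
      have hklt : k < n := by omega
      have hmax : ∀ j, k < j → j ≤ n → pathHeight p j ≠ 0 := by
        intro j h1 h2 h0
        exact Nat.findGreatest_is_greatest h1 h2 ((count_eq_iff_height p j).2 h0)
      have hstep : p[k]? = some true := by
        have hkl : k < p.length := by omega
        have h1 := pathHeight_succ p k
        cases hbv : p[k] with
        | true => rw [List.getElem?_eq_getElem hkl, hbv]
        | false =>
          exfalso
          rw [List.getElem?_eq_getElem hkl, hbv] at h1
          simp only [reduceIte] at h1
          norm_num at h1
          have := hbH (k+1)
          omega
      have hk1H : pathHeight p (k+1) = 1 := by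
        have h1 := pathHeight_succ p k
        rw [hstep] at h1
        simp at h1
        omega
      have hdecomp : p = p.take k ++ true :: p.drop (k+1) := by
        conv_lhs => rw [← List.take_append_drop k p]
        congr 1
        rw [List.drop_eq_getElem_cons (show k < p.length by omega)]
        congr 1
        have := List.getElem?_eq_getElem (show k < p.length by omega)
        rw [hstep] at this
        exact (Option.some_injective _ this.symm)
      have hpos : ∀ j, k < j → 1 ≤ pathHeight p j := by
        intro j hj
        rcases le_or_gt j n with h1 | h1
        · have := hmax j hj h1
          have := hbH j
          omega
        · rw [pathHeight_stable p (by omega)]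
          have := hmax n hklt le_rfl
          have := hbH n
          rw [show p.length = n from hlen]
          omega
      have hut : IsDyck (p.take k) := by
        rw [isDyck_iff]
        refine ⟨isBallot_take p k hb, ?_⟩
        rw [show (p.take k).length = k by simp; omega, pathHeight_take p k k le_rfl]
        exact hkH
      have hvb : IsBallot (p.drop (k+1)) := by
        rw [isBallot_iff]
        intro j
        rw [pathHeight_drop, hk1H]
        have := hpos (k+1+j) (by omega)
        omega
      have hnis : NI (p.take k) ∧ NI (p.drop (k+1)) := by
        rw [← ni_append_cons_true]
        rw [← hdecomp]
        exact hni
      refine ⟨Sum.inr ⟨⟨k, hklt⟩, ⟨p.take k, hut, by simp; omega, hnis.1⟩,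
        ⟨p.drop (k+1), hvb, by simp; omega, hnis.2⟩⟩, ?_⟩
      apply Subtype.ext
      exact hdecomp.symm

/-! ### the dC recurrence -/

lemma pathHeight_fr (w₁ w₂ : List Bool) (j : ℕ) :
    pathHeight (true :: (w₁ ++ false :: w₂)) (w₁.length + 1 + (j + 1))
      = pathHeight w₁ w₁.length + pathHeight w₂ j := by
  rw [show w₁.length + 1 + (j+1) = (w₁.length + (j+1)) + 1 by omega, pathHeight_cons,
    pathHeight_append, pathHeight_cons]
  simp; ring

lemma pathHeight_fr_left (w₁ w₂ : List Bool) (j : ℕ) (hj : j ≤ w₁.length) :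
    pathHeight (true :: (w₁ ++ false :: w₂)) (j + 1) = pathHeight w₁ j + 1 := by
  rw [pathHeight_cons, pathHeight_append_left _ _ hj]
  simp

lemma dyck_fr {w₁ w₂ : List Bool} (hw₁ : IsDyck w₁) (hw₂ : IsDyck w₂) :
    IsDyck (true :: (w₁ ++ false :: w₂))
      ∧ (∀ j, 0 < j → j ≤ w₁.length + 1 → 1 ≤ pathHeight (true :: (w₁ ++ false :: w₂)) j)
      ∧ pathHeight (true :: (w₁ ++ false :: w₂)) (w₁.length + 2) = 0 := by
  have h1 := ((isDyck_iff w₁).1 hw₁)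
  have h2 := ((isDyck_iff w₂).1 hw₂)
  have hpos : ∀ j, 0 < j → j ≤ w₁.length + 1 →
      1 ≤ pathHeight (true :: (w₁ ++ false :: w₂)) j := by
    intro j hj0 hjle
    rw [show j = (j - 1) + 1 by omega, pathHeight_fr_left w₁ w₂ (j-1) (by omega)]
    have := (isBallot_iff w₁).1 h1.1 (j-1)
    omega
  have hzero : pathHeight (true :: (w₁ ++ false :: w₂)) (w₁.length + 2) = 0 := by
    rw [show w₁.length + 2 = w₁.length + 1 + (0 + 1) by omega, pathHeight_fr, h1.2,
      pathHeight_zero]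
    ring
  refine ⟨(isDyck_iff _).2 ⟨?_, ?_⟩, hpos, hzero⟩
  · rw [isBallot_iff]
    intro k
    match k with
    | 0 => rw [pathHeight_zero]
    | (j+1) =>
      rcases le_or_gt (j+1) (w₁.length + 1) with hk | hk
      · have := hpos (j+1) (by omega) hk
        omega
      · rw [show j + 1 = w₁.length + 1 + ((j - w₁.length - 1) + 1) by omega, pathHeight_fr,
          h1.2]
        have := (isBallot_iff w₂).1 h2.1 (j - w₁.length - 1)
        omega
  · rw [show (true :: (w₁ ++ false :: w₂)).length = w₁.length + 1 + (w₂.length + 1) by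
      simp; omega]
    rw [pathHeight_fr, h1.2, h2.2]
    ring

lemma dC_eq {n : ℕ} (hn : 1 ≤ n) :
    dC n = ∑ i ∈ Finset.range (n-1), wC i * dC (n - 2 - i) := by
  classical
  unfold dC wC
  have hcard : ∑ i ∈ Finset.range (n-1), Nat.card (WN i) * Nat.card (DN (n - 2 - i))
      = Nat.card (Σ i : Fin (n-1), WN i × DN (n - 2 - i)) := by
    rw [nat_card_sigma]
    rw [← Fin.sum_univ_eq_sum_range (fun i => Nat.card (WN i) * Nat.card (DN (n - 2 - i))) (n-1)]
    congr 1
    funext i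
    rw [Nat.card_prod]
  rw [hcard]
  symm
  refine Nat.card_eq_of_bijective
    (fun s : Σ i : Fin (n-1), WN i × DN (n - 2 - i) =>
      (⟨true :: (s.2.1.1 ++ false :: s.2.2.1), by
        obtain ⟨⟨i, hi⟩, ⟨w₁, hw₁, hw₁len, hw₁ni⟩, ⟨w₂, hw₂, hw₂len, hw₂ni⟩⟩ := s
        dsimp only
        obtain ⟨hdy, hpos, hzero⟩ := dyck_fr hw₁ hw₂
        refine ⟨hdy, by simp; omega, ?_⟩
        rw [ni_first_return ?_]
        · exact ⟨hw₁ni, hw₂ni⟩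
        · rcases List.eq_nil_or_concat w₂ with hc | _
          · exact Or.inl hc
          · by_cases hc : w₂ = []
            · exact Or.inl hc
            · exact Or.inr (ballot_head hw₂.1 hc)⟩ : DN n))
    ⟨?_, ?_⟩
  · rintro ⟨⟨i, hi⟩, ⟨w₁, hw₁, hw₁len, hw₁ni⟩, ⟨w₂, hw₂, hw₂len, hw₂ni⟩⟩
      ⟨⟨i', hi'⟩, ⟨w₁', hw₁', hw₁len', hw₁ni'⟩, ⟨w₂', hw₂', hw₂len', hw₂ni'⟩⟩ h
    have hval : true :: (w₁ ++ false :: w₂) = true :: (w₁' ++ false :: w₂') :=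
      congrArg (fun x : DN n => x.1) h
    have hlen : w₁.length = w₁'.length := by
      by_contra hne
      rcases lt_or_gt_of_ne hne with hlt | hlt
      · have hp := (dyck_fr hw₁' hw₂').2.1 (w₁.length + 2) (by omega) (by omega)
        rw [← hval, (dyck_fr hw₁ hw₂).2.2] at hp
        omega
      · have hp := (dyck_fr hw₁ hw₂).2.1 (w₁'.length + 2) (by omega) (by omega)
        rw [hval, (dyck_fr hw₁' hw₂').2.2] at hp
        omega
    have htail : w₁ ++ false :: w₂ = w₁' ++ false :: w₂' := by
      exact List.cons_injective hval
    obtain ⟨hueq, hrest⟩ := List.append_inj htail hlen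
    have hveq : w₂ = w₂' := by simpa using hrest
    have hieq : i = i' := by
      have e1 : w₁.length = i := by simpa using hw₁len
      have e2 : w₁'.length = i' := by simpa using hw₁len'
      omega
    subst hieq; subst hueq; subst hveq
    rfl
  · rintro ⟨p, hd, hlen, hni⟩
    have hbH := (isBallot_iff p).1 hd.1
    have hpne : p ≠ [] := by
      intro h0; rw [h0] at hlen; simp at hlen; omega
    set Q : ℕ → Prop := fun k => 0 < k ∧ (p.take k).count true = (p.take k).count false
      with hQ
    have hQn : Q n := by
      refine ⟨by omega, ?_⟩
      have ht : p.take n = p := by rw [← hlen, List.take_length]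
      rw [ht]; exact hd.2
    have hex : ∃ k, Q k := ⟨n, hQn⟩
    set r := Nat.find hex with hr
    obtain ⟨hr0, hrcnt⟩ := Nat.find_spec hex
    have hrle : r ≤ n := Nat.find_min' hex hQn
    have hrH : pathHeight p r = 0 := (count_eq_iff_height p r).1 hrcnt
    have hmin : ∀ j, 0 < j → j < r → pathHeight p j ≠ 0 := by
      intro j hj0 hjr h0
      exact Nat.find_min hex hjr ⟨hj0, (count_eq_iff_height p j).2 h0⟩
    have hstep0 : p[0]? = some true := ballot_head hd.1 hpne
    have h1H : pathHeight p 1 = 1 := by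
      have h1 := pathHeight_succ p 0
      rw [hstep0, pathHeight_zero] at h1
      simp at h1
      omega
    have hr2 : 2 ≤ r := by
      rcases Nat.lt_or_ge r 2 with h2 | h2
      · interval_cases r
        · omega
        · rw [h1H] at hrH; omega
      · exact h2
    have hposr : ∀ j, 0 < j → j < r → 1 ≤ pathHeight p j := by
      intro j hj0 hjr
      have := hmin j hj0 hjr
      have := hbH j
      omega
    have hrm1 : pathHeight p (r - 1) = 1 ∧ p[r-1]? = some false := by
      have h1 := pathHeight_succ p (r-1)
      rw [show r - 1 + 1 = r by omega, hrH] at h1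
      have h2 := hposr (r-1) (by omega) (by omega)
      cases hbv : p[r-1] with
      | true =>
        exfalso
        rw [List.getElem?_eq_getElem (by omega), hbv] at h1
        simp only [reduceIte] at h1
        norm_num at h1
        omega
      | false =>
        rw [List.getElem?_eq_getElem (by omega), hbv] at h1
        simp only [reduceIte] at h1
        norm_num at h1
        exact ⟨by omega, by rw [List.getElem?_eq_getElem (by omega), hbv]⟩
    -- decomposition
    set w₁ := (p.take (r-1)).drop 1 with hw₁def
    set w₂ := p.drop r with hw₂def
    have htake_len : (p.take (r-1)).length = r - 1 := by simp; omega
    have htake0 : (p.take (r-1))[0]? = some true := by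
      rw [List.getElem?_take, if_pos (by omega)]
      exact hstep0
    have hdecomp : p = true :: (w₁ ++ false :: w₂) := by
      conv_lhs => rw [← List.take_append_drop (r-1) p]
      rw [List.drop_eq_getElem_cons (show r - 1 < p.length by omega)]
      have hgf : p[r-1] = false := by
        have := List.getElem?_eq_getElem (show r - 1 < p.length by omega)
        rw [hrm1.2] at this
        exact (Option.some_injective _ this.symm)
      rw [hgf]
      have hexp : p.take (r-1) = true :: w₁ := by
        have e1 : p.take (r-1) = (p.take (r-1))[0] :: (p.take (r-1)).drop 1 := by
          have := List.drop_eq_getElem_cons (show 0 < (p.take (r-1)).length by omega)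
          simpa using this
        have e2 : (p.take (r-1))[0] = true := by
          have := List.getElem?_eq_getElem (show 0 < (p.take (r-1)).length by omega)
          rw [htake0] at this
          exact (Option.some_injective _ this.symm)
        rw [e1, e2]
      rw [hexp, show r - 1 + 1 = r by omega, ← hw₂def]
      simp
    -- heights of w₁
    have hw₁H : ∀ j, j ≤ r - 2 → pathHeight w₁ j = pathHeight p (1 + j) - 1 := by
      intro j hj
      rw [hw₁def, pathHeight_drop, pathHeight_take p (r-1) (1+j) (by omega),
        pathHeight_take p (r-1) 1 (by omega), h1H]
    have hw₁len2 : w₁.length = r - 2 := by rw [hw₁def]; simp; omega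
    have hw₁dyck : IsDyck w₁ := by
      rw [isDyck_iff]
      constructor
      · rw [isBallot_iff]
        intro j
        rcases le_or_gt j (r-2) with hj | hj
        · rw [hw₁H j hj]
          have := hposr (1+j) (by omega) (by omega)
          omega
        · rw [pathHeight_stable w₁ (by omega), hw₁len2, hw₁H (r-2) le_rfl,
            show 1 + (r - 2) = r - 1 by omega, hrm1.1]
          norm_num
      · rw [hw₁len2, hw₁H (r-2) le_rfl, show 1 + (r - 2) = r - 1 by omega, hrm1.1]
        norm_num
    have hw₂H : ∀ j, pathHeight w₂ j = pathHeight p (r + j) := by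
      intro j
      rw [hw₂def, pathHeight_drop, hrH]
      ring
    have hw₂dyck : IsDyck w₂ := by
      rw [isDyck_iff]
      constructor
      · rw [isBallot_iff]
        intro j
        rw [hw₂H]
        exact hbH (r + j)
      · have hl2 : w₂.length = n - r := by rw [hw₂def]; simp; omega
        rw [hl2, hw₂H, show r + (n - r) = n by omega, ← hlen]
        exact ((isDyck_iff p).1 hd).2
    have hnis : NI (w₁ ++ [false]) ∧ NI w₂ := by
      rw [← ni_first_return ?_]
      · rw [← hdecomp]; exact hni
      · by_cases hc : w₂ = []
        · exact Or.inl hc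
        · exact Or.inr (ballot_head hw₂dyck.1 hc)
    have hilt : r - 2 < n - 1 := by omega
    refine ⟨⟨⟨r - 2, hilt⟩, ⟨w₁, hw₁dyck, by simpa using hw₁len2, hnis.1⟩,
      ⟨w₂, hw₂dyck, by rw [hw₂def]; simp; omega, hnis.2⟩⟩, ?_⟩
    apply Subtype.ext
    exact hdecomp.symm

/-! ### power series -/

open PowerSeries

lemma coeff_X_mul' (φ : PowerSeries ℚ) (s : ℕ) :
    coeff s (X * φ) = if 1 ≤ s then coeff (s-1) φ else 0 := by
  match s with
  | 0 => simp
  | s+1 => rw [coeff_succ_X_mul]; simp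

lemma coeff_X2_mul (φ : PowerSeries ℚ) (s : ℕ) :
    coeff s (X^2 * φ) = if 2 ≤ s then coeff (s-2) φ else 0 := by
  rw [PowerSeries.coeff_X_pow_mul']

lemma coeff_X4_mul (φ : PowerSeries ℚ) (s : ℕ) :
    coeff s (X^4 * φ) = if 4 ≤ s then coeff (s-4) φ else 0 := by
  rw [PowerSeries.coeff_X_pow_mul']

lemma coeff_mul_range (φ ψ : PowerSeries ℚ) (k : ℕ) :
    coeff k (φ * ψ) = ∑ i ∈ Finset.range (k+1), coeff i φ * coeff (k-i) ψ := by
  rw [PowerSeries.coeff_mul, Finset.Nat.sum_antidiagonal_eq_sum_range_succ_mk]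

lemma sum_range_even (t : ℕ) (g : ℕ → ℚ) (h : ∀ i, ¬ 2 ∣ i → g i = 0) :
    ∑ i ∈ Finset.range (2*t+1), g i = ∑ a ∈ Finset.range (t+1), g (2*a) := by
  induction t with
  | zero => simp
  | succ t ih =>
    rw [show 2*(t+1)+1 = (2*t+1)+1+1 by omega, Finset.sum_range_succ, Finset.sum_range_succ,
      ih, Finset.sum_range_succ (n := t+1)]
    rw [h (2*t+1) (by omega)]
    rw [show 2*t+1+1 = 2*(t+1) by omega]
    ring

noncomputable def Ads : PowerSeries ℚ := PowerSeries.mk fun n => (bC n : ℚ)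
noncomputable def Dds : PowerSeries ℚ := PowerSeries.mk fun n => (dC n : ℚ)
noncomputable def Wds : PowerSeries ℚ := PowerSeries.mk fun n => (wC n : ℚ)
noncomputable def Tds : PowerSeries ℚ := PowerSeries.mk fun k => ((dC (k+2) : ℚ) + (dC k : ℚ))

lemma hF1 : Ads = Dds + X * (Dds * Ads) := by
  ext n
  rw [map_add, coeff_X_mul']
  match n with
  | 0 =>
    have h0 : bC 0 = dC 0 := by simpa using bC_eq 0
    simp [Ads, Dds, h0]
  | n+1 =>
    rw [if_pos (by omega)]
    simp only [Ads, Dds, coeff_mk, Nat.add_sub_cancel]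
    rw [coeff_mul_range]
    rw [show bC (n+1) = dC (n+1) + ∑ i ∈ Finset.range (n+1), dC i * bC (n + 1 - 1 - i) from
      bC_eq (n+1)]
    push_cast
    congr 1
    apply Finset.sum_congr rfl
    intro i hi
    simp only [Ads, Dds, coeff_mk]

lemma hF2 : Dds = 1 + X^2 * (Wds * Dds) := by
  ext n
  rw [map_add, coeff_one, coeff_X2_mul]
  match n with
  | 0 =>
    simp only [Dds, coeff_mk, dC_zero]
    norm_num
  | 1 =>
    simp only [Dds, coeff_mk, dC_odd (show ¬ 2 ∣ 1 by omega)]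
    norm_num
  | n+2 =>
    rw [if_neg (show ¬((n:ℕ)+2 = 0) by omega), if_pos (show 2 ≤ (n:ℕ)+2 by omega),
      zero_add, show n+2-2 = n by omega, coeff_mul_range]
    simp only [Dds, Wds, coeff_mk]
    rw [show dC (n+2) = ∑ i ∈ Finset.range (n+2-1), wC i * dC (n + 2 - 2 - i) from
      dC_eq (by omega)]
    rw [show n + 2 - 1 = n + 1 by omega]
    push_cast
    apply Finset.sum_congr rfl
    intro i hi
    norm_num

lemma hW : Wds = X^2 * Tds := by
  ext n
  rw [coeff_X2_mul]
  match n with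
  | 0 => simp only [Wds, coeff_mk, wC_zero]; norm_num
  | 1 => simp only [Wds, coeff_mk, wC_one]; norm_num
  | n+2 =>
    simp only [Wds, Tds, coeff_mk, wC_eq]
    rw [if_pos (by omega), show n + 2 - 2 = n by omega]
    push_cast
    ring

lemma hF4 : (1 + X^2) * Dds = 1 + X^2 * Tds := by
  ext n
  rw [add_mul, one_mul, map_add, map_add, coeff_one, coeff_X2_mul, coeff_X2_mul]
  match n with
  | 0 =>
    simp only [Dds, coeff_mk, dC_zero]
    norm_num
  | 1 =>
    simp only [Dds, coeff_mk, dC_odd (show ¬ 2 ∣ 1 by omega)]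
    norm_num
  | n+2 =>
    rw [if_pos (show 2 ≤ (n:ℕ)+2 by omega), if_neg (show ¬((n:ℕ)+2 = 0) by omega),
      if_pos (show 2 ≤ (n:ℕ)+2 by omega), show n + 2 - 2 = n by omega]
    simp only [Dds, Tds, coeff_mk]
    push_cast
    ring

lemma hT : Tds = 1 + X^2 * Tds + X^4 * (Tds * Tds) := by
  have hE : Dds = 1 + X^4 * Tds * Dds := by
    linear_combination hF2 + X^2 * Dds * hW
  have hmul : X^2 * Tds = X^2 * (1 + X^2 * Tds + X^4 * (Tds * Tds)) := by
    linear_combination (1 + X^2) * hE + (X^4 * Tds - 1) * hF4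
  exact mul_left_cancel₀ (pow_ne_zero 2 PowerSeries.X_ne_zero) hmul
open PowerSeries in
/-- the generating function of the numbers of DD-equivalence classes of
ballot paths satisfies `A(x) (1 - x + x^2 - x^3 M(x^2)) = 1 + x^2 M(x^2)`, where `M`
is the Motzkin generating function and `N = M(x^2)` its substitution at `x^2`. -/
theorem dd_classes_gf (M N : PowerSeries ℚ)
    (hM : M = 1 + X * M + X ^ 2 * M ^ 2)
    (hN : ∀ n : ℕ, (coeff n) N = if 2 ∣ n then (coeff (n / 2)) M else 0) :
    (PowerSeries.mk fun n => (numBallotClasses [false, false] n : ℚ)) *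
      (1 - X + X ^ 2 - X ^ 3 * N) = 1 + X ^ 2 * N := by
  have hMc : ∀ s : ℕ, coeff s M = (if s = 0 then 1 else 0)
      + (if 1 ≤ s then coeff (s-1) M else 0)
      + (if 2 ≤ s then ∑ i ∈ Finset.range (s-2+1), coeff i M * coeff (s-2-i) M
          else 0) := by
    intro s
    conv_lhs => rw [hM]
    rw [map_add, map_add, coeff_one, coeff_X_mul', coeff_X2_mul, pow_two, coeff_mul_range]
  have hsum0 : ∀ m : ℕ, ¬ 2 ∣ m →
      (∑ i ∈ Finset.range (m+1),
        (if 2 ∣ i then coeff (i/2) M else 0) * (if 2 ∣ (m-i) then coeff ((m-i)/2) M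
          else 0)) = 0 := by
    intro m hm
    apply Finset.sum_eq_zero
    intro i hi
    rw [Finset.mem_range] at hi
    by_cases h2i : 2 ∣ i
    · rw [if_neg (show ¬ 2 ∣ (m - i) by omega)]
      ring
    · rw [if_neg h2i]
      ring
  have hNsat : N = 1 + X^2 * N + X^4 * (N * N) := by
    ext n
    rw [map_add, map_add, coeff_one, coeff_X2_mul, coeff_X4_mul, coeff_mul_range, hN n]
    simp only [hN]
    rcases Nat.even_or_odd n with ⟨r, rfl⟩ | ⟨r, rfl⟩
    · -- even case n = r + r
      rw [if_pos (show 2 ∣ (r + r) by omega), show (r + r)/2 = r by omega, hMc r]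
      congr 1
      · congr 1
        · -- constant parts
          by_cases h0 : r = 0
          · rw [if_pos h0, if_pos (by omega)]
          · rw [if_neg h0, if_neg (by omega)]
        · -- linear parts
          by_cases h1 : 1 ≤ r
          · rw [if_pos h1, if_pos (show 2 ≤ r + r by omega),
              if_pos (show 2 ∣ (r + r - 2) by omega), show (r + r - 2)/2 = r - 1 by omega]
          · rw [if_neg h1, if_neg (show ¬ 2 ≤ r + r by omega)]
      · -- quadratic parts
        by_cases h2 : 2 ≤ r
        · rw [if_pos h2, if_pos (show 4 ≤ r + r by omega)]
          rw [show r + r - 4 + 1 = 2*(r-2)+1 by omega]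
          rw [sum_range_even (r-2) _ (by
            intro i hodd
            rw [if_neg (by omega)]
            ring)]
          rw [show r - 2 + 1 = (r-2) + 1 by omega]
          apply Finset.sum_congr rfl
          intro a ha
          rw [Finset.mem_range] at ha
          rw [if_pos (show 2 ∣ 2*a by omega), show (2*a)/2 = a by omega,
            if_pos (show 2 ∣ (r + r - 4 - 2*a) by omega),
            show (r + r - 4 - 2*a)/2 = r - 2 - a by omega]
        · rw [if_neg h2, if_neg (show ¬ 4 ≤ r + r by omega)]
    · -- odd case n = 2r+1
      rw [if_neg (show ¬ 2 ∣ (2*r + 1) by omega)]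
      rw [if_neg (show ¬ (2*r + 1 = 0) by omega)]
      have e2 : (if 2 ≤ 2*r + 1 then (if 2 ∣ (2*r + 1 - 2) then coeff ((2*r+1-2)/2) M
          else 0) else 0) = 0 := by
        by_cases h1 : 2 ≤ 2*r + 1
        · rw [if_pos h1, if_neg (show ¬ 2 ∣ (2*r + 1 - 2) by omega)]
        · rw [if_neg h1]
      rw [e2]
      have e3 : (if 4 ≤ 2*r + 1 then
          (∑ i ∈ Finset.range (2*r + 1 - 4 + 1),
            (if 2 ∣ i then coeff (i/2) M else 0) *
              (if 2 ∣ (2*r + 1 - 4 - i) then coeff ((2*r+1-4-i)/2) M else 0)) else 0)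
          = 0 := by
        by_cases h1 : 4 ≤ 2*r + 1
        · rw [if_pos h1]
          exact hsum0 (2*r + 1 - 4) (by omega)
        · rw [if_neg h1]
      rw [e3]
      ring
  have hfac : (Tds - N) * (1 - X^2 - X^4 * (Tds + N)) = 0 := by
    linear_combination hT - hNsat
  have hTN : Tds = N := by
    rcases mul_eq_zero.1 hfac with h | h
    · exact sub_eq_zero.1 h
    · exfalso
      have hc := congrArg (PowerSeries.constantCoeff) h
      simp [map_sub, map_mul, map_pow, map_add] at hc
  have hNe : X^2 * N = (1 + X^2) * Dds - 1 := by
    rw [← hTN]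
    linear_combination -hF4
  have hA : (PowerSeries.mk fun n => (numBallotClasses [false, false] n : ℚ)) = Ads := by
    ext n
    simp [Ads, numBallotClasses_eq]
  rw [hA]
  linear_combination (1 + X^2) * hF1 - (X * Ads + 1) * hNe
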